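/- arXiv:0905.3845 — 4 statements merged into one kernel-verified Lean document; each statement's English description precedes it below -/
import Mathlib

section
/- Let k be a field and X a nonzero k-module. For odd n ≥ 1, the finite precomplex X_n (X in degrees 0,…,n−1 with identity differentials) is not contractible. -/
/-- A precomplex over a commutative ring `k`: a `ℤ`-graded `k`-module together with a
degree-1 `k`-linear map `d`, with no condition imposed on `d²`. -/
structure Precomplex (k : Type) [CommRing k] where
  X : ℤ → Type
  [acg : ∀ i, AddCommGroup (X i)]
  [mod : ∀ i, Module k (X i)]
  d : ∀ i, X i →ₗ[k] X (i + 1)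

attribute [instance] Precomplex.acg Precomplex.mod

/-- A precomplex is contractible if there is a degree `-1` map `h` with `d h + h d = id`. -/
def Precomplex.Contractible {k : Type} [CommRing k] (C : Precomplex k) : Prop :=
  ∃ h : ∀ i, C.X (i + 1) →ₗ[k] C.X i,
    ∀ i : ℤ, (C.d i).comp (h i) + (h (i + 1)).comp (C.d (i + 1)) = LinearMap.id

/-- Over a field `k`, for a nonzero `k`-vector space `X` and odd `n ≥ 1`, the finite
precomplex `X_n` (`X` in degrees `0,…,n-1`, identity differentials) is not contractible. -/
theorem stmt3 (k : Type) [Field k] (X : Type) [AddCommGroup X] [Module k X] [Nontrivial X]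
    (n : ℕ) (hn : 1 ≤ n) (hodd : Odd n) (C : Precomplex k)
    (e : ∀ i : ℤ, 0 ≤ i → i < (n : ℤ) → (C.X i ≃ₗ[k] X))
    (hz : ∀ i : ℤ, ¬(0 ≤ i ∧ i < (n : ℤ)) → Subsingleton (C.X i))
    (hd : ∀ (i : ℤ) (h0 : 0 ≤ i) (h1 : i + 1 < (n : ℤ)) (x : C.X i),
      e (i + 1) (by omega) h1 (C.d i x) = e i h0 (by omega) x) :
    ¬ C.Contractible := by
  rintro ⟨h, hh⟩
  obtain ⟨x0, hx0⟩ := exists_ne (0 : X)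
  by_cases h2 : n = 1
  · subst h2
    have hs1 : Subsingleton (C.X ((0:ℤ) + 1)) := hz (0 + 1) (by omega)
    have hsm : Subsingleton (C.X (-1:ℤ)) := hz (-1) (by omega)
    set e0 := e 0 le_rfl (by norm_num) with he0
    set w : C.X 0 := e0.symm x0 with hw
    have H := LinearMap.congr_fun (hh (-1)) (show C.X (-1 + 1) from w)
    simp only [LinearMap.add_apply, LinearMap.comp_apply, LinearMap.id_apply] at H
    have hz1 : h (-1) w = 0 := @Subsingleton.elim _ hsm _ _
    have hz2 : C.d (-1 + 1) w = 0 := @Subsingleton.elim _ hs1 _ _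
    rw [hz1, hz2, map_zero, map_zero, add_zero] at H
    apply hx0
    calc x0 = e0 w := (e0.apply_symm_apply x0).symm
    _ = e0 0 := by rw [H]
    _ = 0 := map_zero _
  · have hn2 : 2 ≤ n := by omega
    have key : ∀ m : ℕ, ∀ i : ℤ, ∀ hieq : i = (m : ℤ), ∀ hi1 : i + 1 < (n : ℤ), ∀ x : X,
        e i (by omega) (by omega) (h i ((e (i + 1) (by omega) hi1).symm x))
          = if Even m then x else 0 := by
      intro m
      induction m with
      | zero =>
        rintro i rfl hi1 x
        rw [if_pos Even.zero]
        set w : C.X ((0:ℕ):ℤ) := (e ((0:ℕ):ℤ) (by omega) (by omega)).symm x with hw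
        have hdw : C.d ((0:ℕ):ℤ) w = (e (((0:ℕ):ℤ) + 1) (by omega) hi1).symm x := by
          apply (e (((0:ℕ):ℤ) + 1) (by omega) hi1).injective
          rw [hd ((0:ℕ):ℤ) (by omega) hi1 w, LinearEquiv.apply_symm_apply,
            LinearEquiv.apply_symm_apply]
        have H := LinearMap.congr_fun (hh (-1)) (show C.X (-1 + 1) from w)
        simp only [LinearMap.add_apply, LinearMap.comp_apply, LinearMap.id_apply] at H
        have hz1 : h (-1) w = 0 := @Subsingleton.elim _ (hz (-1) (by omega)) _ _
        rw [hz1, map_zero, zero_add] at H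
        -- H : h (-1+1) (C.d (-1+1) w) = w
        have H' : h ((0:ℕ):ℤ) (C.d ((0:ℕ):ℤ) w) = w := H
        rw [hdw] at H'
        rw [H']
        exact (e ((0:ℕ):ℤ) (by omega) (by omega)).apply_symm_apply x
      | succ m ih =>
        rintro i hi hi1 x
        have hi' : i = (m : ℤ) + 1 := by push_cast at hi ⊢; omega
        subst hi'
        set j : ℤ := (m : ℤ) with hj
        set v : C.X (j + 1) := (e (j + 1) (by omega) (by omega)).symm x with hv
        set u : C.X (j + 1 + 1) := (e (j + 1 + 1) (by omega) hi1).symm x with hu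
        have hdv : C.d (j + 1) v = u := by
          apply (e (j + 1 + 1) (by omega) hi1).injective
          rw [hd (j + 1) (by omega) hi1 v, LinearEquiv.apply_symm_apply,
            LinearEquiv.apply_symm_apply]
        have H := LinearMap.congr_fun (hh j) v
        simp only [LinearMap.add_apply, LinearMap.comp_apply, LinearMap.id_apply] at H
        rw [hdv] at H
        -- H : C.d j (h j v) + h (j+1) u = v
        have ihv : e j (by omega) (by omega) (h j v) = if Even m then x else 0 :=
          ih j rfl (by omega) x
        have Happ := congrArg (e (j + 1) (by omega) (by omega)) H
        rw [map_add] at Happ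
        rw [hd j (by omega) (by omega) (h j v)] at Happ
        have Happ' : (if Even m then x else 0) + e (j + 1) (by omega) (by omega) (h (j + 1) u) = x := by
          rw [← ihv, Happ]
          exact LinearEquiv.apply_symm_apply _ x
        have goal' : e (j + 1) (by omega) (by omega) (h (j + 1) u)
            = if Even (m + 1) then x else 0 := by
          by_cases hm : Even m
          · rw [if_neg (by simp [Nat.even_add_one, hm])]
            rw [if_pos hm] at Happ'
            exact add_eq_left.mp Happ'
          · rw [if_pos (by simp [Nat.even_add_one, hm])]
            rw [if_neg hm, zero_add] at Happ'
            exact Happ'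
        exact goal'
    -- final contradiction
    have hn3 : 3 ≤ n := by obtain ⟨t, ht⟩ := hodd; omega
    have hne : ¬ Even (n - 2) := by
      obtain ⟨t, ht⟩ := hodd
      rintro ⟨r, hr⟩
      omega
    have hi1 : ((n - 2 : ℕ) : ℤ) + 1 < (n : ℤ) := by omega
    set i : ℤ := ((n - 2 : ℕ) : ℤ) with hidef
    have hkey := key (n - 2) i rfl hi1 x0
    rw [if_neg hne] at hkey
    set u : C.X (i + 1) := (e (i + 1) (by omega) hi1).symm x0 with hu
    have hsn : Subsingleton (C.X (i + 1 + 1)) := hz (i + 1 + 1) (by omega)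
    have H := LinearMap.congr_fun (hh i) u
    simp only [LinearMap.add_apply, LinearMap.comp_apply, LinearMap.id_apply] at H
    have hz2 : C.d (i + 1) u = 0 := @Subsingleton.elim _ hsn _ _
    rw [hz2, map_zero, add_zero] at H
    -- H : C.d i (h i u) = u
    have Happ := congrArg (e (i + 1) (by omega) hi1) H
    rw [hd i (by omega) hi1 (h i u)] at Happ
    have h0 : e i (by omega) (by omega) (h i u) = 0 := hkey
    rw [h0] at Happ
    -- Happ : 0 = e (i+1) _ hi1 u
    apply hx0
    rw [← (e (i + 1) (by omega) hi1).apply_symm_apply x0, ← hu, ← Happ]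
end

section
/- Let A = k[c] or A = k[c]/cⁿ (c in degree 2). A morphism f of cdg A-modules is contractible by a graded A-linear homotopy if and only if it is contractible by a graded k-linear homotopy. In particular: if h is a degree −1 k-linear map with hd + dh = f and f commutes with d, then h can be replaced by an A-linear homotopy; concretely, hd + dh = f and fd = df imply hd² = d²h up to homotopy-correction, and an A-linear contracting homotopy exists. -/
/-- **Contractibility over `A = k[c]` (or `k[c]/cⁿ`) can be checked `k`-linearly.**
Cdg modules over the initial cdg algebras are precomplexes (with `d^{2n} = 0` in the
quotient case), and a graded homotopy is `A`-linear exactly when it commutes with the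
action of `c`, i.e. with `d²`.  For a morphism `f` of precomplexes, there is a graded
`k`-linear homotopy `h` with `d h + h d = f` if and only if there is one which moreover
commutes with `d²` (i.e. an `A`-linear homotopy). -/
theorem stmt8 (k : Type) [CommRing k] (M N : Precomplex k)
    (f : ∀ i : ℤ, M.X i →ₗ[k] N.X i)
    (hf : ∀ i : ℤ, (N.d i).comp (f i) = (f (i + 1)).comp (M.d i)) :
    (∃ h : ∀ i : ℤ, M.X (i + 1) →ₗ[k] N.X i,
      ∀ i : ℤ, (N.d i).comp (h i) + (h (i + 1)).comp (M.d (i + 1)) = f (i + 1)) ↔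
    (∃ h : ∀ i : ℤ, M.X (i + 1) →ₗ[k] N.X i,
      (∀ i : ℤ, (N.d i).comp (h i) + (h (i + 1)).comp (M.d (i + 1)) = f (i + 1)) ∧
      (∀ i : ℤ, (h (i + 1 + 1)).comp ((M.d (i + 1 + 1)).comp (M.d (i + 1))) =
        ((N.d (i + 1)).comp (N.d i)).comp (h i))) := by
  constructor
  · rintro ⟨h, hh⟩
    refine ⟨h, hh, fun i => ?_⟩
    ext m
    have e1 := LinearMap.congr_fun (hh i) m
    have e2 := LinearMap.congr_fun (hh (i + 1)) (M.d (i + 1) m)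
    have e3 := LinearMap.congr_fun (hf (i + 1)) m
    simp only [LinearMap.comp_apply, LinearMap.add_apply] at e1 e2 e3 ⊢
    have e1' : N.d (i + 1) (N.d i (h i m)) + N.d (i + 1) (h (i + 1) (M.d (i + 1) m))
        = N.d (i + 1) (f (i + 1) m) := by rw [← map_add, e1]
    linear_combination (norm := abel) e2 - e1' - e3
  · rintro ⟨h, hh, _⟩
    exact ⟨h, hh⟩
end

section
/- Let A be a graded algebra such that the category of graded A-modules has finite homological dimension. Then every differential graded A-module that is projective as a graded A-module and acyclic (has zero cohomology) is contractible. -/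
open CategoryTheory

universe w v

section Prelim
variable (R : Type) [Ring R]

/-- canonical surjection from free module -/
noncomputable def epsL (M : Type*) [AddCommGroup M] [Module R M] : (M →₀ R) →ₗ[R] M :=
  Finsupp.linearCombination R _root_.id

lemma epsL_surj (M : Type*) [AddCommGroup M] [Module R M] :
    Function.Surjective (epsL R M) := by
  rw [← LinearMap.range_eq_top, epsL, Finsupp.range_linearCombination]
  simp

lemma epsL_single (M : Type*) [AddCommGroup M] [Module R M] (a : M) (r : R) :
    epsL R M (Finsupp.single a r) = r • a := by
  simp [epsL]

/-- canonical syzygy -/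
noncomputable def syzObj : ModuleCat.{v} R → ModuleCat.{v} R :=
  fun A => ModuleCat.of R (LinearMap.ker (epsL R A))

/-- iterated canonical syzygy -/
noncomputable def syzIter (A : ModuleCat.{v} R) : ℕ → ModuleCat.{v} R
  | 0 => A
  | (k+1) => syzObj R (syzIter A k)

lemma syzIter_succ_inner (A : ModuleCat.{v} R) (k : ℕ) :
    syzIter R A (k+1) = syzIter R (syzObj R A) k := by
  induction k with
  | zero => rfl
  | succ k ih => show syzObj R _ = syzObj R _; rw [ih]

/-- transfer projectivity along equivalence -/
lemma projEquiv {M : Type*} {N : Type*} [AddCommGroup M] [Module R M]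
    [AddCommGroup N] [Module R N] [Module.Projective R M] (e : M ≃ₗ[R] N) :
    Module.Projective R N :=
  Module.Projective.of_split (e.symm : N →ₗ[R] M) (e : M →ₗ[R] N) (by ext x; simp)

/-- compatibility of epsL with linear equivs -/
lemma epsL_comm {M : Type*} {N : Type*} [AddCommGroup M] [Module R M]
    [AddCommGroup N] [Module R N] (e : M ≃ₗ[R] N) (x : M →₀ R) :
    epsL R N (Finsupp.domLCongr (R := R) e.toEquiv x) = e (epsL R M x) := by
  have : (epsL R N).comp ((Finsupp.domLCongr (R := R) e.toEquiv : (M →₀ R) ≃ₗ[R] (N →₀ R)) :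
      (M →₀ R) →ₗ[R] (N →₀ R)) = (e : M →ₗ[R] N).comp (epsL R M) := by
    apply Finsupp.lhom_ext
    intro a b
    simp [epsL]
  exact DFunLike.congr_fun this x

noncomputable def syzCongr {M : Type*} {N : Type*} [AddCommGroup M] [Module R M]
    [AddCommGroup N] [Module R N] (e : M ≃ₗ[R] N) :
    LinearMap.ker (epsL R M) ≃ₗ[R] LinearMap.ker (epsL R N) := by
  refine LinearEquiv.ofSubmodules (Finsupp.domLCongr e.toEquiv : (M →₀ R) ≃ₗ[R] (N →₀ R)) _ _ ?_
  ext x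
  simp only [Submodule.mem_map, LinearMap.mem_ker]
  constructor
  · rintro ⟨y, hy, rfl⟩
    rw [LinearEquiv.coe_coe, epsL_comm R e, hy, map_zero]
  · intro hx
    have hsy : (Finsupp.domLCongr (R := R) e.toEquiv : (M →₀ R) ≃ₗ[R] (N →₀ R))
        ((Finsupp.domLCongr (R := R) e.toEquiv : (M →₀ R) ≃ₗ[R] (N →₀ R)).symm x) = x :=
      LinearEquiv.apply_symm_apply _ x
    refine ⟨(Finsupp.domLCongr (R := R) e.toEquiv : (M →₀ R) ≃ₗ[R] (N →₀ R)).symm x, ?_, hsy⟩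
    have h2 : epsL R N x = e (epsL R M (((Finsupp.domLCongr (R := R) e.toEquiv :
        (M →₀ R) ≃ₗ[R] (N →₀ R))).symm x)) := by
      rw [← epsL_comm R e, hsy]
    rw [hx] at h2
    have := h2.symm
    rwa [map_eq_zero_iff _ e.injective] at this

end Prelim

section PartI

variable (R : Type) [Ring R]

/-- the canonical free resolution complex -/
noncomputable def resX (A : ModuleCat.{w} R) (j : ℕ) : ModuleCat.{w} R :=
  ModuleCat.of R ((syzIter R A j : Type w) →₀ R)

noncomputable def resD (A : ModuleCat.{w} R) (j : ℕ) : resX R A (j+1) ⟶ resX R A j :=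
  ModuleCat.ofHom ((LinearMap.ker (epsL R (syzIter R A j))).subtype ∘ₗ epsL R (syzIter R A (j+1)))

lemma resD_apply_mem (A : ModuleCat.{w} R) (j : ℕ) (x : (resX R A (j+1) : Type w)) :
    resD R A j x ∈ LinearMap.ker (epsL R (syzIter R A j)) :=
  (epsL R (syzIter R A (j+1)) x).2

lemma resD_comp (A : ModuleCat.{w} R) (j : ℕ) :
    resD R A (j+1) ≫ resD R A j = 0 := by
  apply ModuleCat.hom_ext
  apply LinearMap.ext
  intro x
  have h0 : epsL R (syzIter R A (j+1))
      ((LinearMap.ker (epsL R (syzIter R A (j+1)))).subtype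
        (epsL R (syzIter R A (j+2)) x)) = 0 :=
    LinearMap.mem_ker.mp (epsL R (syzIter R A (j+2)) x).2
  show (LinearMap.ker (epsL R (syzIter R A j))).subtype
    (epsL R (syzIter R A (j+1))
      ((LinearMap.ker (epsL R (syzIter R A (j+1)))).subtype
        (epsL R (syzIter R A (j+2)) x))) = 0
  rw [h0]
  simp
  rfl

noncomputable def resComplex (A : ModuleCat.{w} R) : ChainComplex (ModuleCat.{w} R) ℕ :=
  ChainComplex.of (resX R A) (resD R A) (resD_comp R A)

lemma resComplex_exactAt_succ (A : ModuleCat.{w} R) (j : ℕ) :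
    (resComplex R A).ExactAt (j+1) := by
  rw [HomologicalComplex.exactAt_iff' _ (j+2) (j+1) j
    (ComplexShape.prev_eq' _ (by simp)) (ComplexShape.next_eq' _ (by simp)),
    ShortComplex.moduleCat_exact_iff]
  intro x hx
  have hx' : resD R A j x = 0 := by
    have hd : (resComplex R A).d (j+1) j = resD R A j := ChainComplex.of_d _ _ j
    rw [← hd]; exact hx
  have hmem : x ∈ LinearMap.ker (epsL R (syzIter R A (j+1))) := by
    show epsL R (syzIter R A (j+1)) x = 0
    apply Subtype.ext
    exact hx'
  obtain ⟨y, hy⟩ := epsL_surj R (syzIter R A (j+2)) ⟨(x : (syzIter R A (j+1) : Type _) →₀ R), hmem⟩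
  refine ⟨y, ?_⟩
  have hd : (resComplex R A).d (j+2) (j+1) = resD R A (j+1) := ChainComplex.of_d _ _ (j+1)
  show (resComplex R A).d (j+2) (j+1) y = x
  rw [hd]
  show (LinearMap.ker (epsL R (syzIter R A (j+1)))).subtype
    (epsL R (syzIter R A (j+2)) y) = x
  rw [hy]
  rfl

lemma res_d10_eps (A : ModuleCat.{w} R) :
    (resComplex R A).d 1 0 ≫ (ModuleCat.ofHom (epsL R A) : resX R A 0 ⟶ A) = 0 := by
  apply ModuleCat.hom_ext
  apply LinearMap.ext
  intro x
  have hd : (resComplex R A).d 1 0 = resD R A 0 := ChainComplex.of_d (resX R A) (resD R A) 0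
  show epsL R A ((resComplex R A).d 1 0 x) = 0
  rw [hd]
  exact LinearMap.mem_ker.mp (resD_apply_mem R A 0 x)

noncomputable def resolution (A : ModuleCat.{w} R) : ProjectiveResolution A where
  complex := resComplex R A
  projective j := (IsProjective.iff_projective (R := R) ((syzIter R A j : Type w) →₀ R)).1 inferInstance
  π := (ChainComplex.toSingle₀Equiv _ _).symm ⟨(ModuleCat.ofHom (epsL R A) : resX R A 0 ⟶ A), res_d10_eps R A⟩
  quasiIso := ⟨fun n => by
    cases n with
    | zero =>
      rw [ChainComplex.quasiIsoAt₀_iff, ShortComplex.quasiIso_iff_of_zeros']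
      · have hcomp : resD R A 0 ≫ (ModuleCat.ofHom (epsL R A) : resX R A 0 ⟶ A) = 0 := by
          apply ModuleCat.hom_ext
          apply LinearMap.ext
          intro x
          exact LinearMap.mem_ker.mp (epsL R (syzIter R A 1) x).2
        have hex0 : (ShortComplex.mk (resD R A 0) (ModuleCat.ofHom (epsL R A) : resX R A 0 ⟶ A) hcomp).Exact ∧
            Epi (ShortComplex.mk (resD R A 0) (ModuleCat.ofHom (epsL R A) : resX R A 0 ⟶ A) hcomp).g := by
          constructor
          · rw [ShortComplex.moduleCat_exact_iff]
            intro x hx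
            have hmem : x ∈ LinearMap.ker (epsL R A) := hx
            obtain ⟨y, hy⟩ := epsL_surj R (syzIter R A 1) ⟨x, hmem⟩
            refine ⟨y, ?_⟩
            show (LinearMap.ker (epsL R A)).subtype (epsL R (syzIter R A 1) y) = x
            rw [hy]
            rfl
          · exact (ModuleCat.epi_iff_surjective _).2 (epsL_surj R A)
        refine (ShortComplex.exact_and_epi_g_iff_of_iso ?_).2 hex0
        refine ShortComplex.isoMk (Iso.refl _) (Iso.refl _) (Iso.refl _) ?_ ?_
        · simp only [ShortComplex.isoMk, Iso.refl_hom, Category.id_comp, Category.comp_id]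
          exact (ChainComplex.of_d (resX R A) (resD R A) 0).symm
        · simp [ChainComplex.toSingle₀Equiv]; rfl
      all_goals rfl
    | succ n =>
      rw [quasiIsoAt_iff_exactAt']
      · exact resComplex_exactAt_succ R A n
      · apply ChainComplex.exactAt_succ_single_obj⟩

/-- syzygy iterates commute with ULift -/
noncomputable def syzIterULift (A : ModuleCat.{0} R) :
    ∀ k : ℕ, (syzIter R (ModuleCat.of R (ULift.{w} (A : Type))) k : Type w) ≃ₗ[R]
      (syzIter R A k : Type)
  | 0 => ULift.moduleEquiv (R := R) (M := (A : Type))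
  | (k+1) => syzCongr R (syzIterULift A k)

/-- Part I conclusion: (n+1)-st syzygy of any module is projective -/
lemma partI (n : ℕ)
    (hfd : ∀ i : ℕ, n < i → ∀ M N : ModuleCat.{w} R,
      Limits.IsZero (((Ext ℤ (ModuleCat.{w} R) i).obj (Opposite.op M)).obj N))
    (A : ModuleCat.{w} R) : Module.Projective R (syzIter R A (n+1)) := by
  set N : ModuleCat.{w} R := syzIter R A (n+1) with hN
  set P := resolution R A with hP
  have hExt := hfd (n+1) (Nat.lt_succ_self n) A N
  have hiso := P.isoExt (R := ℤ) (n+1) N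
  have hzero : Limits.IsZero ((P.complex.linearYonedaObj ℤ N).homology (n+1)) :=
    Limits.IsZero.of_iso hExt hiso.symm
  have hexact : (P.complex.linearYonedaObj ℤ N).ExactAt (n+1) :=
    (HomologicalComplex.exactAt_iff_isZero_homology _ _).2 hzero
  rw [HomologicalComplex.exactAt_iff' _ n (n+1) (n+2)
    (ComplexShape.prev_eq' _ (by simp)) (ComplexShape.next_eq' _ (by simp)),
    ShortComplex.moduleCat_exact_iff] at hexact
  -- the cocycle
  let f₀ : P.complex.X (n+1) ⟶ N := (ModuleCat.ofHom (epsL R N) : resX R A (n+1) ⟶ N)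
  have hcocycle : (P.complex.linearYonedaObj ℤ N).d (n+1) (n+2) f₀ = 0 := by
    have hd : (P.complex.linearYonedaObj ℤ N).d (n+1) (n+2) =
        ModuleCat.ofHom (Linear.leftComp ℤ N (P.complex.d (n+2) (n+1))) :=
      ChainComplex.linearYonedaObj_d P.complex ℤ N (n+1) (n+2)
    rw [hd]
    show P.complex.d (n+2) (n+1) ≫ f₀ = 0
    have hd2 : P.complex.d (n+2) (n+1) = resD R A (n+1) :=
      ChainComplex.of_d (resX R A) (resD R A) (n+1)
    rw [hd2]
    apply ModuleCat.hom_ext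
    apply LinearMap.ext
    intro x
    exact LinearMap.mem_ker.mp (epsL R (syzIter R A (n+2)) x).2
  obtain ⟨g₁, hg⟩ := hexact f₀ hcocycle
  let g : P.complex.X n ⟶ N := g₁
  have hg' : (P.complex.linearYonedaObj ℤ N).d n (n+1) g = f₀ := hg
  have hd3 : (P.complex.linearYonedaObj ℤ N).d n (n+1) =
      ModuleCat.ofHom (Linear.leftComp ℤ N (P.complex.d (n+1) n)) :=
    ChainComplex.linearYonedaObj_d P.complex ℤ N n (n+1)
  rw [hd3] at hg'
  have hg2 : P.complex.d (n+1) n ≫ g = f₀ := hg'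
  have hg'' : resD R A n ≫ g = f₀ := by
    have hd4 : P.complex.d (n+1) n = resD R A n :=
      ChainComplex.of_d (resX R A) (resD R A) n
    rw [← hd4]
    exact hg2
  -- g restricted to the syzygy is the identity
  have hretr : ∀ z : (N : Type w), g ((LinearMap.ker (epsL R (syzIter R A n))).subtype z) = z := by
    intro z
    obtain ⟨y, hy⟩ := epsL_surj R (syzIter R A (n+1)) z
    have h1 : g (resD R A n y) = epsL R N y := congrArg (fun φ => φ y) hg''
    rw [← hy]
    exact h1
  exact Module.Projective.of_split (M := ((syzIter R A n : Type w) →₀ R))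
    (LinearMap.ker (epsL R (syzIter R A n))).subtype g.hom
    (by ext z; exact hretr z)

/-- transfer to small modules -/
lemma partI_small (n : ℕ)
    (hfd : ∀ i : ℕ, n < i → ∀ M N : ModuleCat.{w} R,
      Limits.IsZero (((Ext ℤ (ModuleCat.{w} R) i).obj (Opposite.op M)).obj N))
    (A : ModuleCat.{0} R) : Module.Projective R (syzIter R A (n+1)) := by
  haveI := partI R n hfd (ModuleCat.of R (ULift.{w} A))
  exact projEquiv R (syzIterULift R A (n+1))

end PartI

section PartII

variable (R : Type) [Ring R]

/-- one cosyzygy step -/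
noncomputable def cosObj : ModuleCat.{v} R → ModuleCat.{v} R :=
  fun B => ModuleCat.of R ((↑(Injective.under B) : Type v) ⧸ LinearMap.range (show ↑B →ₗ[R] ↑(Injective.under B) from (Injective.ι B).hom))

noncomputable def cosIter (B : ModuleCat.{v} R) : ℕ → ModuleCat.{v} R
  | 0 => B
  | (k+1) => cosObj R (cosIter B k)

lemma cosIter_succ_inner (B : ModuleCat.{v} R) (k : ℕ) :
    cosIter R B (k+1) = cosIter R (cosObj R B) k := by
  induction k with
  | zero => rfl
  | succ k ih => show cosObj R _ = cosObj R _; rw [ih]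

/-- base extension lemma: projective quotient gives extension property -/
lemma ext_of_proj_quot {P : Type*} [AddCommGroup P] [Module R P]
    (U : Submodule R P) (hq : Module.Projective R (P ⧸ U))
    {N : Type*} [AddCommGroup N] [Module R N] (f : U →ₗ[R] N) :
    ∃ g : P →ₗ[R] N, ∀ u : U, g u = f u := by
  obtain ⟨s, hs⟩ := Module.projective_lifting_property U.mkQ LinearMap.id
    (Submodule.mkQ_surjective U)
  have mem : ∀ x : P, x - s (U.mkQ x) ∈ U := by
    intro x
    rw [← Submodule.Quotient.mk_eq_zero]
    have : U.mkQ (x - s (U.mkQ x)) = U.mkQ x - U.mkQ (s (U.mkQ x)) := by rw [map_sub]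
    have h2 : U.mkQ (s (U.mkQ x)) = U.mkQ x := DFunLike.congr_fun hs (U.mkQ x)
    show U.mkQ _ = 0
    rw [this, h2, sub_self]
  refine ⟨f ∘ₗ LinearMap.codRestrict U (LinearMap.id - s ∘ₗ U.mkQ) mem, ?_⟩
  intro u
  have h0 : U.mkQ (u : P) = 0 := (Submodule.Quotient.mk_eq_zero U).2 u.2
  simp only [LinearMap.coe_comp, Function.comp_apply, LinearMap.codRestrict_apply]
  congr 1
  ext
  simp [h0]

/-- transfer lemma: extension along canonical syzygy inclusion implies extension along any
submodule of a projective with the same quotient. -/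
lemma ext_transfer {P : Type*} [AddCommGroup P] [Module R P] [Module.Projective R P]
    (U : Submodule R P) {N : Type*} [AddCommGroup N] [Module R N]
    (hext : ∀ f' : LinearMap.ker (epsL R (P ⧸ U)) →ₗ[R] N,
      ∃ G : ((P ⧸ U) →₀ R) →ₗ[R] N, ∀ s : LinearMap.ker (epsL R (P ⧸ U)), G s = f' s)
    (f : U →ₗ[R] N) :
    ∃ g : P →ₗ[R] N, ∀ u : U, g u = f u := by
  obtain ⟨h, hh⟩ := Module.projective_lifting_property U.mkQ (epsL R (P ⧸ U))
    (Submodule.mkQ_surjective U)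
  obtain ⟨h', hh'⟩ := Module.projective_lifting_property (epsL R (P ⧸ U)) U.mkQ
    (epsL_surj R (P ⧸ U))
  have hmem : ∀ s : LinearMap.ker (epsL R (P ⧸ U)), h s ∈ U := by
    intro s
    rw [← Submodule.Quotient.mk_eq_zero]
    have h1 : U.mkQ (h s) = epsL R (P ⧸ U) (s : (P ⧸ U) →₀ R) :=
      DFunLike.congr_fun hh (s : (P ⧸ U) →₀ R)
    rw [show (Submodule.Quotient.mk (h (s : (P ⧸ U) →₀ R)) : P ⧸ U) = U.mkQ (h s) from rfl, h1,
      LinearMap.mem_ker.mp s.2]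
  obtain ⟨G, hG⟩ := hext (f ∘ₗ LinearMap.codRestrict U
    (h ∘ₗ (LinearMap.ker (epsL R (P ⧸ U))).subtype) (fun s => hmem s))
  have mem2 : ∀ x : P, x - h (h' x) ∈ U := by
    intro x
    rw [← Submodule.Quotient.mk_eq_zero]
    have e1 : U.mkQ (h (h' x)) = epsL R (P ⧸ U) (h' x) := DFunLike.congr_fun hh (h' x)
    have e2 : epsL R (P ⧸ U) (h' x) = U.mkQ x := DFunLike.congr_fun hh' x
    show U.mkQ _ = 0
    rw [map_sub, e1, e2, sub_self]
  refine ⟨f ∘ₗ LinearMap.codRestrict U (LinearMap.id - h ∘ₗ h') mem2 + G ∘ₗ h', ?_⟩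
  intro u
  have hker : h' (u : P) ∈ LinearMap.ker (epsL R (P ⧸ U)) := by
    rw [LinearMap.mem_ker]
    have e2 : epsL R (P ⧸ U) (h' (u : P)) = U.mkQ (u : P) := DFunLike.congr_fun hh' (u : P)
    rw [e2, show U.mkQ (u : P) = 0 from (Submodule.Quotient.mk_eq_zero U).2 u.2]
  have hGu : G (h' (u : P)) = f ⟨h (h' (u : P)), hmem ⟨h' (u : P), hker⟩⟩ := hG ⟨h' (u : P), hker⟩
  simp only [LinearMap.add_apply, LinearMap.coe_comp, Function.comp_apply,
    LinearMap.codRestrict_apply]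
  rw [hGu, ← map_add]
  congr 1
  ext
  simp

/-- extension along an injection into a categorically injective module -/
lemma injective_extension {E : ModuleCat.{v} R} (hE : Injective E) {X Y : Type v}
    [AddCommGroup X] [Module R X] [AddCommGroup Y] [Module R Y]
    (ι : X →ₗ[R] Y) (hι : Function.Injective ι) (T : X →ₗ[R] E) :
    ∃ T' : Y →ₗ[R] E, ∀ x, T' (ι x) = T x := by
  let X' : ModuleCat.{v} R := ModuleCat.of R (ULift.{v} X)
  let Y' : ModuleCat.{v} R := ModuleCat.of R (ULift.{v} Y)
  let ι' : X' ⟶ Y' := ModuleCat.ofHom ((ULift.moduleEquiv (R := R) (M := Y)).symm.toLinearMap ∘ₗ ι ∘ₗ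
    (ULift.moduleEquiv (R := R) (M := X)).toLinearMap)
  haveI : Mono ι' := (ModuleCat.mono_iff_injective _).2 (by
    intro a b hab
    have h2 : ι a.down = ι b.down := congrArg ULift.down hab
    exact ULift.ext a b (hι h2))
  let g : X' ⟶ E := ModuleCat.ofHom ((T : X →ₗ[R] E) ∘ₗ (ULift.moduleEquiv (R := R) (M := X)).toLinearMap)
  let T'' : Y' ⟶ E := Injective.factorThru g ι'
  refine ⟨T''.hom ∘ₗ (ULift.moduleEquiv (R := R) (M := Y)).symm.toLinearMap, ?_⟩
  intro x
  have hfac : ι' ≫ T'' = g := Injective.comp_factorThru g ι'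
  have := DFunLike.congr_fun (congrArg (fun (h : X' ⟶ E) => h.hom) hfac)
    (ULift.up x)
  simpa [ι', g] using this

/-- main dimension-shifting induction -/
lemma mainExt : ∀ (k : ℕ) (A : ModuleCat.{0} R)
    (_ : Module.Projective R (syzIter R A k)) (B : ModuleCat.{v} R)
    (f : LinearMap.ker (epsL R A) →ₗ[R] cosIter R B k),
    ∃ g : (A →₀ R) →ₗ[R] cosIter R B k, ∀ s : LinearMap.ker (epsL R A), g s = f s := by
  intro k
  induction k with
  | zero =>
    intro A hA B f
    have hq : Module.Projective R (((A : Type) →₀ R) ⧸ LinearMap.ker (epsL R A)) := by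
      have e := ((epsL R A).quotKerEquivOfSurjective (epsL_surj R A)).symm
      have hA0 : Module.Projective R A := hA
      exact projEquiv R e
    exact ext_of_proj_quot R _ hq f
  | succ k ih =>
    intro A hA B f
    let S₁ : ModuleCat.{0} R := syzObj R A
    let Bk : ModuleCat.{v} R := cosIter R B k
    let E : ModuleCat.{v} R := Injective.under Bk
    let e : Bk →ₗ[R] E := (Injective.ι Bk).hom
    have he : Function.Injective e := by
      exact (ModuleCat.mono_iff_injective _).1 inferInstance
    let π : E →ₗ[R] cosIter R B (k+1) := (LinearMap.range e).mkQ
    have hπs : Function.Surjective π := Submodule.mkQ_surjective _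
    have hπe : ∀ b : Bk, π (e b) = 0 := by
      intro b
      exact (Submodule.Quotient.mk_eq_zero _).2 ⟨b, rfl⟩
    -- lift f ∘ epsL through π
    obtain ⟨G, hG⟩ := Module.projective_lifting_property π
      ((f : (S₁ : Type) →ₗ[R] cosIter R B (k+1)) ∘ₗ epsL R S₁) hπs
    have hGap : ∀ x : ((S₁ : Type) →₀ R), π (G x) = f (epsL R S₁ x) :=
      fun x => DFunLike.congr_fun hG x
    have hrange : ∀ s : LinearMap.ker (epsL R S₁), G s ∈ LinearMap.range e := by
      intro s
      have h0 : π (G s) = 0 := by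
        rw [hGap, LinearMap.mem_ker.mp s.2]
        exact map_zero f
      rwa [← Submodule.ker_mkQ (LinearMap.range e), LinearMap.mem_ker]
    let e' : (Bk : Type v) ≃ₗ[R] LinearMap.range e := LinearEquiv.ofInjective e he
    let g₂ : LinearMap.ker (epsL R S₁) →ₗ[R] Bk := (e'.symm : LinearMap.range e →ₗ[R] Bk) ∘ₗ
      LinearMap.codRestrict (LinearMap.range e)
        (G ∘ₗ (LinearMap.ker (epsL R S₁)).subtype) hrange
    have hg₂ : ∀ s : LinearMap.ker (epsL R S₁), e (g₂ s) = G s := by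
      intro s
      show e (e'.symm ⟨G s, hrange s⟩) = G s
      have : ∀ y : LinearMap.range e, e (e'.symm y) = y := fun y => by
        have := e'.apply_symm_apply y
        exact congrArg Subtype.val this
      exact this _
    have hA' : Module.Projective R (syzIter R S₁ k) := by
      rw [← syzIter_succ_inner]; exact hA
    obtain ⟨H, hH⟩ := ih S₁ hA' B g₂
    let G' : ((S₁ : Type) →₀ R) →ₗ[R] E := G - e ∘ₗ H
    have hG'ker : LinearMap.ker (epsL R S₁) ≤ LinearMap.ker G' := by
      intro s hs
      have : G' s = G s - e (H s) := rfl
      rw [LinearMap.mem_ker, this, hH ⟨s, hs⟩, hg₂ ⟨s, hs⟩, sub_self]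
    -- factor G' through S₁
    let q := (epsL R S₁).quotKerEquivOfSurjective (epsL_surj R S₁)
    have happ : ∀ x : ((S₁ : Type) →₀ R), q (Submodule.Quotient.mk x) = epsL R S₁ x :=
      fun x => rfl
    let T : (S₁ : Type) →ₗ[R] E :=
      (Submodule.liftQ _ G' hG'ker) ∘ₗ (q.symm : (S₁ : Type) →ₗ[R] _)
    have hT : ∀ x : ((S₁ : Type) →₀ R), T (epsL R S₁ x) = G' x := by
      intro x
      show Submodule.liftQ _ G' hG'ker (q.symm (epsL R S₁ x)) = G' x
      rw [← happ x, LinearEquiv.symm_apply_apply]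
      rfl
    have hπT : ∀ sv : (S₁ : Type), π (T sv) = f sv := by
      intro sv
      obtain ⟨x, rfl⟩ := epsL_surj R S₁ sv
      rw [hT x]
      show π (G x - e (H x)) = _
      rw [map_sub, hπe, sub_zero, hGap]
    -- extend T along the inclusion into the free module, via injectivity of E
    have hEinj : Injective E := inferInstance
    let ι0 : (S₁ : Type) →ₗ[R] ((A : Type) →₀ R) := (LinearMap.ker (epsL R A)).subtype
    let ι : ULift.{v} (S₁ : Type) →ₗ[R] ULift.{v} ((A : Type) →₀ R) :=
      (ULift.moduleEquiv (R := R) (M := ((A : Type) →₀ R))).symm.toLinearMap ∘ₗ ι0 ∘ₗ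
        (ULift.moduleEquiv (R := R) (M := (S₁ : Type))).toLinearMap
    have hιinj : Function.Injective ι := by
      intro a b hab
      have h2 : ι0 a.down = ι0 b.down := congrArg ULift.down hab
      exact ULift.ext a b ((LinearMap.ker (epsL R A)).injective_subtype h2)
    obtain ⟨T'', hT''⟩ := injective_extension R hEinj ι hιinj
      (T ∘ₗ (ULift.moduleEquiv (R := R) (M := (S₁ : Type))).toLinearMap)
    refine ⟨(π ∘ₗ T'') ∘ₗ (ULift.moduleEquiv (R := R) (M := ((A : Type) →₀ R))).symm.toLinearMap, ?_⟩
    intro s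
    have h1 : T'' (ULift.up (ι0 s)) = T s := by
      have := hT'' (ULift.up s)
      simpa [ι] using this
    show π (T'' (ULift.up (ι0 s))) = f s
    rw [h1]
    exact hπT s

/-- the (n+1)-st cosyzygy is injective -/
lemma cos_injective (n : ℕ)
    (hsmall : ∀ A : ModuleCat.{0} R, Module.Projective R (syzIter R A (n+1)))
    (B : ModuleCat.{v} R) : Module.Injective R (cosIter R B (n+1)) := by
  apply Module.Baer.injective
  intro I φ
  obtain ⟨g, hg⟩ := ext_transfer R (P := R) I
    (fun f' => mainExt R (n+1) (ModuleCat.of R (R ⧸ I)) (hsmall _) B f') φ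
  exact ⟨g, fun x mem => hg ⟨x, mem⟩⟩

end PartII

section PartIII

variable (R : Type) [Ring R] (C : CochainComplex (ModuleCat.{v} R) ℤ)

/-- factor a map killing cycles through the differential, given an extension property
for the range inclusion -/
lemma extend_through_d (i₁ i₂ : ℤ) {N : Type v} [AddCommGroup N] [Module R N]
    (f : C.X i₁ →ₗ[R] N) (hker : LinearMap.ker (C.d i₁ i₂).hom ≤ LinearMap.ker f)
    (hext : ∀ T : LinearMap.range (C.d i₁ i₂).hom →ₗ[R] N,
      ∃ T' : C.X i₂ →ₗ[R] N, ∀ t : LinearMap.range (C.d i₁ i₂).hom, T' t = T t) :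
    ∃ g : C.X i₂ →ₗ[R] N, ∀ x : C.X i₁, g (C.d i₁ i₂ x) = f x := by
  set d : (C.X i₁ : Type v) →ₗ[R] C.X i₂ := (C.d i₁ i₂).hom with hd
  let T : LinearMap.range d →ₗ[R] N :=
    (Submodule.liftQ _ f hker) ∘ₗ (d.quotKerEquivRange).symm.toLinearMap
  have hT : ∀ x : C.X i₁, T (d.rangeRestrict x) = f x := by
    intro x
    have h1 : d.quotKerEquivRange (Submodule.Quotient.mk x) = d.rangeRestrict x :=
      Subtype.ext (d.quotKerEquivRange_apply_mk x)
    show Submodule.liftQ _ f hker (d.quotKerEquivRange.symm (d.rangeRestrict x)) = f x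
    rw [← h1, LinearEquiv.symm_apply_apply, Submodule.liftQ_apply]
  obtain ⟨g, hg⟩ := hext T
  refine ⟨g, fun x => ?_⟩
  have : g (d.rangeRestrict x : C.X i₂) = T (d.rangeRestrict x) := hg _
  rw [hT] at this
  exact this

/-- W-lemma: extension along differentials for targets of finite injective depth -/
lemma Wlemma (hproj : ∀ i : ℤ, Projective (C.X i)) (hacyc : ∀ i : ℤ, C.ExactAt i) :
    ∀ (k : ℕ) (B : ModuleCat.{v} R) (_ : Module.Injective R (cosIter R B k))
      (i₀ i₁ i₂ : ℤ) (_ : i₁ = i₀ + 1) (_ : i₂ = i₁ + 1)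
      (f : C.X i₁ →ₗ[R] B) (_ : ∀ x : C.X i₀, f (C.d i₀ i₁ x) = 0),
    ∃ g : C.X i₂ →ₗ[R] B, ∀ x : C.X i₁, g (C.d i₁ i₂ x) = f x := by
  have hex : ∀ (i₀ i₁ i₂ : ℤ), i₁ = i₀ + 1 → i₂ = i₁ + 1 →
      ∀ x : C.X i₁, C.d i₁ i₂ x = 0 → ∃ y : C.X i₀, C.d i₀ i₁ y = x := by
    intro i₀ i₁ i₂ h01 h12 x hx
    have h1 : (ComplexShape.up ℤ).prev i₁ = i₀ := ComplexShape.prev_eq' _ (by show _ = _; omega)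
    have h2 : (ComplexShape.up ℤ).next i₁ = i₂ := ComplexShape.next_eq' _ (by show _ = _; omega)
    have := (HomologicalComplex.exactAt_iff' C i₀ i₁ i₂ h1 h2).1 (hacyc i₁)
    exact (ShortComplex.moduleCat_exact_iff _).1 this x hx
  intro k
  induction k with
  | zero =>
    intro B hB i₀ i₁ i₂ h01 h12 f hf
    refine extend_through_d R C i₁ i₂ f ?_ ?_
    · intro x hx
      obtain ⟨y, hy⟩ := hex i₀ i₁ i₂ h01 h12 x (LinearMap.mem_ker.mp hx)
      rw [LinearMap.mem_ker, ← hy, hf y]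
    · intro T
      obtain ⟨T', hT'⟩ := hB.out (LinearMap.range (C.d i₁ i₂).hom).subtype
        (LinearMap.range (C.d i₁ i₂).hom).injective_subtype T
      exact ⟨T', hT'⟩
  | succ k ih =>
    intro B hB i₀ i₁ i₂ h01 h12 f hf
    let E : ModuleCat.{v} R := Injective.under B
    let e : B →ₗ[R] E := (Injective.ι B).hom
    have he : Function.Injective e := by
      exact (ModuleCat.mono_iff_injective _).1 inferInstance
    let π : E →ₗ[R] cosObj R B := (LinearMap.range e).mkQ
    have hπs : Function.Surjective π := Submodule.mkQ_surjective _
    have hπe : ∀ b : B, π (e b) = 0 := fun b => (Submodule.Quotient.mk_eq_zero _).2 ⟨b, rfl⟩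
    have hEinj : Injective E := inferInstance
    -- first extension into E
    obtain ⟨G, hG⟩ := extend_through_d R C i₁ i₂ (e ∘ₗ f)
      (by
        intro x hx
        obtain ⟨y, hy⟩ := hex i₀ i₁ i₂ h01 h12 x (LinearMap.mem_ker.mp hx)
        rw [LinearMap.mem_ker]
        show e (f x) = 0
        rw [← hy, hf y, map_zero])
      (by
        intro T
        exact injective_extension R hEinj (LinearMap.range (C.d i₁ i₂).hom).subtype
          (LinearMap.range (C.d i₁ i₂).hom).injective_subtype T)
    -- push down to the cosyzygy and use induction
    have hB' : Module.Injective R (cosIter R (cosObj R B) k) := by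
      rw [← cosIter_succ_inner]; exact hB
    obtain ⟨H, hH⟩ := ih (cosObj R B) hB' i₁ i₂ (i₂+1) h12 rfl (π ∘ₗ G)
      (by
        intro x
        show π (G (C.d i₁ i₂ x)) = 0
        rw [hG x]
        exact hπe (f x))
    have hCproj : Module.Projective R (C.X (i₂+1)) :=
      (IsProjective.iff_projective (R := R) (P := C.X (i₂+1))).2 (by exact hproj (i₂+1))
    obtain ⟨H', hH'⟩ := Module.projective_lifting_property π H hπs
    have hH'ap : ∀ z : C.X (i₂+1), π (H' z) = H z := fun z => DFunLike.congr_fun hH' z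
    let G' : (C.X i₂ : Type v) →ₗ[R] E := G - H' ∘ₗ (C.d i₂ (i₂+1)).hom
    have hG'π : ∀ z : C.X i₂, π (G' z) = 0 := by
      intro z
      show π (G z - H' (C.d i₂ (i₂+1) z)) = 0
      rw [map_sub, hH'ap, hH z]
      exact sub_self _
    have hrange : ∀ z : C.X i₂, G' z ∈ LinearMap.range e := by
      intro z
      have := hG'π z
      rwa [← Submodule.ker_mkQ (LinearMap.range e), LinearMap.mem_ker]
    let e' : (B : Type v) ≃ₗ[R] LinearMap.range e := LinearEquiv.ofInjective e he
    let g : (C.X i₂ : Type v) →ₗ[R] B := (e'.symm : LinearMap.range e →ₗ[R] B) ∘ₗ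
      LinearMap.codRestrict (LinearMap.range e) G' hrange
    have hge : ∀ z : C.X i₂, e (g z) = G' z := by
      intro z
      show e (e'.symm ⟨G' z, hrange z⟩) = G' z
      have : ∀ y : LinearMap.range e, e (e'.symm y) = y := fun y =>
        congrArg Subtype.val (e'.apply_symm_apply y)
      exact this _
    refine ⟨g, fun x => he ?_⟩
    rw [hge]
    show G (C.d i₁ i₂ x) - H' (C.d i₂ (i₂+1) (C.d i₁ i₂ x)) = e (f x)
    have hdd : C.d i₂ (i₂+1) (C.d i₁ i₂ x) = 0 := by
      have := C.d_comp_d i₁ i₂ (i₂+1)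
      have := congrArg (fun φ => φ x) this
      exact this
    rw [hdd, map_zero, sub_zero, hG x]
    rfl

end PartIII

/-- **Graded projective acyclic dg modules over a graded algebra of finite homological
dimension are contractible.**  We take the graded algebra `A` concentrated in degree `0`
(a ring `R`), so that graded `A`-modules are `ℤ`-indexed families of `R`-modules, dg
`A`-modules are cochain complexes of `R`-modules and graded projectivity is degreewise
projectivity.  Finite homological dimension of the graded module category is expressed
by the vanishing of `Ext^i` for all large `i`.  Then every cochain complex of
projective `R`-modules which is acyclic (exact in every degree) is contractible,
i.e. its identity is null-homotopic. -/
theorem stmt12 (R : Type) [Ring R]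
    (hfd : ∃ n : ℕ, ∀ i : ℕ, n < i → ∀ M N : ModuleCat R,
      Limits.IsZero (((Ext ℤ (ModuleCat R) i).obj (Opposite.op M)).obj N)) :
    ∀ C : CochainComplex (ModuleCat R) ℤ,
      (∀ i : ℤ, Projective (C.X i)) → (∀ i : ℤ, C.ExactAt i) →
      Nonempty (Homotopy (𝟙 C) 0) := by
  obtain ⟨n, hfd⟩ := hfd
  intro C hproj hacyc
  have hsmall := partI_small R n hfd
  have hcos := cos_injective R n hsmall
  have hex : ∀ (i₀ i₁ i₂ : ℤ), i₁ = i₀ + 1 → i₂ = i₁ + 1 →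
      ∀ x : C.X i₁, C.d i₁ i₂ x = 0 → ∃ y : C.X i₀, C.d i₀ i₁ y = x := by
    intro i₀ i₁ i₂ h01 h12 x hx
    have h1 : (ComplexShape.up ℤ).prev i₁ = i₀ := ComplexShape.prev_eq' _ (by show _ = _; omega)
    have h2 : (ComplexShape.up ℤ).next i₁ = i₂ := ComplexShape.next_eq' _ (by show _ = _; omega)
    have := (HomologicalComplex.exactAt_iff' C i₀ i₁ i₂ h1 h2).1 (hacyc i₁)
    exact (ShortComplex.moduleCat_exact_iff _).1 this x hx
  have hdd : ∀ (i₀ i₁ i₂ : ℤ) (x : C.X i₀), C.d i₁ i₂ (C.d i₀ i₁ x) = 0 := by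
    intro i₀ i₁ i₂ x
    exact congrArg (fun φ => φ x) (C.d_comp_d i₀ i₁ i₂)
  -- the cycles
  let Z : ∀ i : ℤ, Submodule R (C.X i) := fun i => LinearMap.ker (C.d i (i+1)).hom
  -- cycles are projective
  have hZproj : ∀ i : ℤ, Module.Projective R (Z i) := by
    intro i
    let B : ModuleCat R := ModuleCat.of R (Z i)
    let f₁ : (C.X (i-1) : Type _) →ₗ[R] B :=
      LinearMap.codRestrict (Z i) (C.d (i-1) i).hom (fun x => by
        rw [LinearMap.mem_ker]; exact hdd (i-1) i (i+1) x)
    obtain ⟨g, hg⟩ := Wlemma R C hproj hacyc (n+1) B (hcos B) (i-2) (i-1) i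
      (by omega) (by omega) f₁
      (by
        intro x
        apply Subtype.ext
        show C.d (i-1) i (C.d (i-2) (i-1) x) = 0
        exact hdd (i-2) (i-1) i x)
    have hretr : ∀ z : (Z i : Type _), g ((Z i).subtype z) = z := by
      intro z
      obtain ⟨y, hy⟩ := hex (i-1) i (i+1) (by omega) rfl (z : C.X i) (LinearMap.mem_ker.mp z.2)
      have h1 : g (C.d (i-1) i y) = f₁ y := hg y
      have h2 : (Z i).subtype z = C.d (i-1) i y := hy.symm
      rw [h2, h1]
      exact Subtype.ext hy
    haveI : Module.Projective R (C.X i) :=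
      (IsProjective.iff_projective (R := R) (P := C.X i)).2 (by exact hproj i)
    exact Module.Projective.of_split (Z i).subtype (g : (C.X i : Type _) →ₗ[R] Z i)
      (LinearMap.ext (fun z => hretr z))
  -- sections of the corestricted differentials
  have hsec : ∀ i : ℤ, ∃ σ : (Z (i+1) : Type _) →ₗ[R] C.X i,
      ∀ z : Z (i+1), C.d i (i+1) (σ z) = (z : C.X (i+1)) := by
    intro i
    let dbar : (C.X i : Type _) →ₗ[R] Z (i+1) :=
      LinearMap.codRestrict (Z (i+1)) (C.d i (i+1)).hom (fun x => by
        rw [LinearMap.mem_ker]; exact hdd i (i+1) (i+1+1) x)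
    have hsurj : Function.Surjective dbar := by
      intro z
      obtain ⟨y, hy⟩ := hex i (i+1) (i+1+1) rfl rfl (z : C.X (i+1)) (LinearMap.mem_ker.mp z.2)
      exact ⟨y, Subtype.ext hy⟩
    haveI := hZproj (i+1)
    obtain ⟨σ, hσ⟩ := Module.projective_lifting_property dbar LinearMap.id hsurj
    refine ⟨σ, fun z => ?_⟩
    have : dbar (σ z) = z := DFunLike.congr_fun hσ z
    exact congrArg Subtype.val this
  choose σ hσ using hsec
  -- the contracting homotopy
  let πbar : ∀ i : ℤ, (C.X i : Type _) →ₗ[R] Z (i+1) := fun i =>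
    LinearMap.codRestrict (Z (i+1)) (C.d i (i+1)).hom (fun x => by
      rw [LinearMap.mem_ker]; exact hdd i (i+1) (i+1+1) x)
  let r : ∀ i : ℤ, (C.X i : Type _) →ₗ[R] Z i := fun i =>
    LinearMap.codRestrict (Z i) (LinearMap.id - (σ i) ∘ₗ (πbar i)) (fun x => by
      rw [LinearMap.mem_ker]
      show C.d i (i+1) (x - σ i (πbar i x)) = 0
      rw [map_sub, hσ i (πbar i x)]
      show C.d i (i+1) x - C.d i (i+1) x = 0
      exact sub_self _)
  let homMap : ∀ j : ℤ, (C.X (j+1) ⟶ C.X j) := fun j => ModuleCat.ofHom ((σ j) ∘ₗ (r (j+1)))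
  refine ⟨⟨fun i j => if h : i = j + 1 then (eqToHom (congrArg C.X h)) ≫ homMap j else 0,
    ?_, ?_⟩⟩
  · intro i j h
    exact dif_neg (fun hh => h hh.symm)
  · intro i
    obtain ⟨j, rfl⟩ : ∃ j, i = j + 1 := ⟨i - 1, by omega⟩
    rw [dNext_eq _ (show (ComplexShape.up ℤ).Rel (j+1) (j+1+1) from rfl),
      prevD_eq _ (show (ComplexShape.up ℤ).Rel j (j+1) from rfl)]
    simp only [dif_pos rfl, eqToHom_refl, Category.id_comp, HomologicalComplex.id_f,
      HomologicalComplex.zero_f_apply, add_zero]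
    apply ModuleCat.hom_ext
    apply LinearMap.ext
    intro x
    show x = (C.d (j+1) (j+1+1) ≫ homMap (j+1)) x + (homMap j ≫ C.d j (j+1)) x
    have e1 : (C.d (j+1) (j+1+1) ≫ homMap (j+1)) x = σ (j+1) (πbar (j+1) x) := by
      show σ (j+1) (r (j+1+1) (C.d (j+1) (j+1+1) x)) = σ (j+1) (πbar (j+1) x)
      congr 1
      apply Subtype.ext
      show C.d (j+1) (j+1+1) x - σ (j+1+1) (πbar (j+1+1) (C.d (j+1) (j+1+1) x)) =
        C.d (j+1) (j+1+1) x
      have h0 : πbar (j+1+1) (C.d (j+1) (j+1+1) x) = 0 := by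
        apply Subtype.ext
        show C.d (j+1+1) (j+1+1+1) (C.d (j+1) (j+1+1) x) = 0
        exact hdd (j+1) (j+1+1) (j+1+1+1) x
      rw [h0, map_zero, sub_zero]
    have e2 : (homMap j ≫ C.d j (j+1)) x = x - σ (j+1) (πbar (j+1) x) := by
      show C.d j (j+1) (σ j (r (j+1) x)) = x - σ (j+1) (πbar (j+1) x)
      rw [hσ j (r (j+1) x)]
      rfl
    rw [e1, e2]
    abel
end

section
/- Let k be a commutative ring, R a k-algebra with central element ρ that is not invertible, and A = R_ρ[u] the cdg algebra R[u] (u in degree 2) with curvature ρu. Then the cdg A-module A_{ρ,u} given by the precomplex 0 → R →^ρ R →^1 R →^ρ R →^1 ⋯ (starting in degree 0, alternating ρ and identity) with the natural u-action is not contractible. -/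
/-- **The module `A_{ρ,u}` over `R_ρ[u]` is not contractible when `ρ` is not
invertible (Example 3.15).**  Let `R` be a `k`-algebra with central element `ρ` which
is not invertible, and `A = R_ρ[u]` the cdg algebra `R[u]` (`u` of degree 2) with
curvature `ρu`.  The cdg `A`-module `A_{ρ,u}` is the precomplex
`0 → R →^ρ R →^1 R →^ρ R →^1 ⋯` (components `R` in degrees `n ≥ 0`, differentials
`d_n = ρ·(-)` for even `n` and the identity for odd `n`), with `u` acting as the
degree 2 shift.  An `A`-linear contracting homotopy would consist of left `R`-linear
maps `h n : M^{n+1} → M^n` commuting with the `u`-action (which forces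
`h (n+2) = h n`, and `h 1 = 0` since the map out of the bottom degree vanishes)
satisfying `d h + h d = id` in every degree.  No such homotopy exists. -/
theorem stmt17 (k : Type) [CommRing k] (R : Type) [Ring R] [Algebra k R]
    (ρ : R) (hρ : ∀ r : R, ρ * r = r * ρ) (hρinv : ¬ IsUnit ρ) :
    ¬ ∃ h : ℕ → (R →ₗ[R] R),
      -- `h` commutes with the `u`-action
      (∀ n : ℕ, h (n + 2) = h n) ∧ h 1 = 0 ∧
      -- contraction in degree 0 (the differential out of degree `-1` is zero)
      (∀ x : R, h 0 (ρ * x) = x) ∧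
      -- contraction in the degrees `n + 1`
      (∀ (n : ℕ) (x : R),
        (if Even n then ρ * h n x else h n x) +
          h (n + 1) (if Even (n + 1) then ρ * x else x) = x) := by
  rintro ⟨h, hu, h1, hc0, hcn⟩
  have key := hcn 0 1
  simp [h1] at key
  exact hρinv ⟨⟨ρ, h 0 1, key, hρ _ ▸ key⟩, rfl⟩
end
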